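/- arXiv:2605.21848 — 2 statements merged into one kernel-verified Lean document; each statement's English description precedes it below -/
import Mathlib

section
/- For all real numbers a > 0 and b > 0, the integral over (0,∞) of (log(1 + (a/b)x))^2 · f_{a,b}(x) with respect to x equals (ψ(b/2) − ψ((a+b)/2))^2 + ψ′(b/2) − ψ′((a+b)/2). -/
open MeasureTheory

/-- Digamma function `ψ(x) = d/dx log Γ(x)`. -/
noncomputable def digamma (x : ℝ) : ℝ :=
  deriv (fun y => Real.log (Real.Gamma y)) x

/-- Trigamma function `ψ′(x) = d²/dx² log Γ(x)`. -/
noncomputable def trigamma (x : ℝ) : ℝ :=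
  deriv (deriv (fun y => Real.log (Real.Gamma y))) x

/-- Density of the F-distribution with degrees of freedom `(a, b)`. -/
noncomputable def fDensity (a b x : ℝ) : ℝ :=
  (Real.Gamma ((a + b) / 2) / (Real.Gamma (a / 2) * Real.Gamma (b / 2))) *
    (a / b) ^ (a / 2) * x ^ (a / 2 - 1) * (1 + a * x / b) ^ (-((a + b) / 2))

open Set

lemma gamma_ne_pole {x : ℝ} (hx : 0 < x) : ∀ m : ℕ, x ≠ -(m:ℝ) := by
  intro m h
  have : (0:ℝ) ≤ m := Nat.cast_nonneg m
  linarith [h ▸ hx]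

lemma contDiffAt_realGamma {x : ℝ} (hx : 0 < x) : ContDiffAt ℝ 3 Real.Gamma x := by
  have hU : IsOpen {s : ℂ | 0 < s.re} := isOpen_lt continuous_const Complex.continuous_re
  have hd : DifferentiableOn ℂ Complex.Gamma {s : ℂ | 0 < s.re} := by
    intro s hs
    refine (Complex.differentiableAt_Gamma s fun m => ?_).differentiableWithinAt
    intro h
    rw [h] at hs
    simp only [Set.mem_setOf_eq, Complex.neg_re, Complex.natCast_re] at hs
    have : (0:ℝ) ≤ m := Nat.cast_nonneg m
    linarith
  have h1 : ContDiffAt ℂ 3 Complex.Gamma (x : ℂ) :=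
    ((hd.analyticOnNhd hU) (x:ℂ) (by simpa using hx)).contDiffAt
  have h2 : ContDiffAt ℝ 3 (fun y : ℝ => (Complex.Gamma (y:ℂ)).re) x :=
    Complex.reCLM.contDiff.contDiffAt.comp x
      ((h1.restrict_scalars ℝ).comp x Complex.ofRealCLM.contDiff.contDiffAt)
  refine h2.congr_of_eventuallyEq (Filter.Eventually.of_forall fun y => ?_)
  simp [Complex.Gamma_ofReal]

lemma contDiffOn_logGamma :
    ContDiffOn ℝ 3 (fun y => Real.log (Real.Gamma y)) (Set.Ioi (0:ℝ)) := by
  intro x hx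
  have hx : (0:ℝ) < x := hx
  exact ((contDiffAt_realGamma hx).log (Real.Gamma_pos_of_pos hx).ne').contDiffWithinAt

lemma hasDerivAt_logGamma {x : ℝ} (hx : 0 < x) :
    HasDerivAt (fun y => Real.log (Real.Gamma y)) (digamma x) x :=
  ((Real.differentiableAt_Gamma (gamma_ne_pole hx)).log
    (Real.Gamma_ne_zero (gamma_ne_pole hx))).hasDerivAt

lemma contDiffOn_digamma : ContDiffOn ℝ 2 digamma (Set.Ioi (0:ℝ)) :=
  contDiffOn_logGamma.deriv_of_isOpen isOpen_Ioi (by norm_num)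

lemma hasDerivAt_digamma {x : ℝ} (hx : 0 < x) :
    HasDerivAt digamma (trigamma x) x := by
  have h : DifferentiableAt ℝ digamma x :=
    ((contDiffOn_digamma.differentiableOn (by norm_num)).differentiableAt
      (Ioi_mem_nhds hx))
  exact h.hasDerivAt


lemma realBeta {u v : ℝ} (hu : 0 < u) (hv : 0 < v) :
    ∫ y in Ioo (0:ℝ) 1, y ^ (u-1) * (1-y) ^ (v-1) =
      Real.Gamma u * Real.Gamma v / Real.Gamma (u+v) := by
  have hne : Real.Gamma (u+v) ≠ 0 := (Real.Gamma_pos_of_pos (by linarith)).ne'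
  have key : Complex.betaIntegral u v =
      ((∫ y in Ioo (0:ℝ) 1, y ^ (u-1) * (1-y) ^ (v-1) : ℝ) : ℂ) := by
    rw [Complex.betaIntegral, intervalIntegral.integral_of_le zero_le_one,
      MeasureTheory.integral_Ioc_eq_integral_Ioo]
    have : ∀ x ∈ Ioo (0:ℝ) 1, ((x:ℂ) ^ ((u:ℂ) - 1) * (1 - (x:ℂ)) ^ ((v:ℂ) - 1)) =
        (((x ^ (u-1) * (1-x) ^ (v-1) : ℝ)) : ℂ) := by
      intro x hx
      rw [Complex.ofReal_mul, Complex.ofReal_cpow hx.1.le, Complex.ofReal_cpow (by linarith [hx.2])]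
      push_cast
      ring_nf
    rw [setIntegral_congr_fun measurableSet_Ioo this]
    exact integral_ofReal
  have h2 := Complex.Gamma_mul_Gamma_eq_betaIntegral
    (s := (u:ℂ)) (t := (v:ℂ)) (by simpa using hu) (by simpa using hv)
  rw [key, Complex.Gamma_ofReal, Complex.Gamma_ofReal, ← Complex.ofReal_add,
    Complex.Gamma_ofReal] at h2
  have h4 : Real.Gamma u * Real.Gamma v =
      Real.Gamma (u+v) * ∫ y in Ioo (0:ℝ) 1, y ^ (u-1) * (1-y) ^ (v-1) := by
    exact_mod_cast h2
  field_simp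
  linarith [h4]


lemma beta_integrable {u v : ℝ} (hu : 0 < u) (hv : 0 < v) :
    IntegrableOn (fun y => y ^ (u-1) * (1-y) ^ (v-1)) (Ioo (0:ℝ) 1) := by
  have h := (Complex.betaIntegral_convergent (u := (u:ℂ)) (v := (v:ℂ))
    (by simpa using hu) (by simpa using hv))
  rw [intervalIntegrable_iff_integrableOn_Ioo_of_le zero_le_one] at h
  refine IntegrableOn.congr_fun h.norm (fun x hx => ?_) measurableSet_Ioo
  simp only [norm_mul]
  rw [Complex.norm_cpow_eq_rpow_re_of_pos hx.1]
  have h1x : (0:ℝ) < 1 - x := by linarith [hx.2]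
  have : ((1:ℂ) - (x:ℝ)) = (((1 - x : ℝ)):ℂ) := by push_cast; ring
  rw [this, Complex.norm_cpow_eq_rpow_re_of_pos h1x]
  norm_num

lemma log_bound {t : ℝ} (ht : 0 < t) (ht1 : t < 1) {e : ℝ} (he : 0 < e) :
    |Real.log t| ≤ e⁻¹ * t ^ (-e) := by
  rw [abs_of_neg (Real.log_neg ht ht1)]
  have h1 : Real.log (t ^ (-e)) = -e * Real.log t := Real.log_rpow ht _
  have h2 : Real.log (t ^ (-e)) ≤ t ^ (-e) - 1 :=
    Real.log_le_sub_one_of_pos (Real.rpow_pos_of_pos ht _)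
  have h3 : (0:ℝ) < t ^ (-e) := Real.rpow_pos_of_pos ht _
  rw [h1] at h2
  rw [← mul_le_mul_iff_right₀ he]
  calc e * -Real.log t = -e * Real.log t := by ring
    _ ≤ t ^ (-e) - 1 := h2
    _ ≤ t ^ (-e) := by linarith
    _ = e * (e⁻¹ * t ^ (-e)) := by field_simp

lemma logpow_bound (k : ℕ) {v : ℝ} (hv : 0 < v) {y : ℝ} (hy : y ∈ Ioo (0:ℝ) 1) :
    |Real.log (1-y)|^k * (1-y) ^ (v-1) ≤
      ((v / (2*(k+1)))⁻¹)^k * (1-y) ^ (v/2-1) := by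
  set e : ℝ := v / (2*(k+1)) with he_def
  have he : 0 < e := by positivity
  have ht : (0:ℝ) < 1 - y := by linarith [hy.2]
  have ht1 : 1 - y < 1 := by linarith [hy.1]
  have h1 : |Real.log (1-y)|^k ≤ (e⁻¹)^k * ((1-y) ^ (-e))^k := by
    rw [← mul_pow]
    exact pow_le_pow_left₀ (abs_nonneg _) (log_bound ht ht1 he) k
  have h2 : ((1-y) ^ (-e))^k = (1-y) ^ (-(e*k)) := by
    rw [← Real.rpow_natCast ((1-y) ^ (-e)) k, ← Real.rpow_mul ht.le]
    ring_nf
  calc |Real.log (1-y)|^k * (1-y) ^ (v-1)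
      ≤ ((e⁻¹)^k * (1-y) ^ (-(e*k))) * (1-y) ^ (v-1) := by
        rw [← h2]
        exact mul_le_mul_of_nonneg_right h1 (Real.rpow_nonneg ht.le _)
    _ = (e⁻¹)^k * (1-y) ^ (v-1-e*k) := by
        rw [mul_assoc, ← Real.rpow_add ht]
        ring_nf
    _ ≤ (e⁻¹)^k * (1-y) ^ (v/2-1) := by
        refine mul_le_mul_of_nonneg_left ?_ (by positivity)
        refine Real.rpow_le_rpow_of_exponent_ge ht (by linarith) ?_
        have hk : e * k ≤ v/2 := by
          rw [he_def]
          rw [div_mul_eq_mul_div, div_le_div_iff₀ (by positivity) (by norm_num)]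
          have hk0 : (0:ℝ) ≤ k := Nat.cast_nonneg k
          nlinarith [hv.le]
        linarith

lemma contOn_logpow (k : ℕ) (u v : ℝ) :
    ContinuousOn (fun y => Real.log (1-y) ^k * (y ^ (u-1) * (1-y) ^ (v-1)))
      (Ioo (0:ℝ) 1) := by
  have h1 : ContinuousOn (fun y : ℝ => Real.log (1-y)) (Ioo (0:ℝ) 1) :=
    ((continuous_const.sub continuous_id).continuousOn).log
      (fun x hx => by simp only [Pi.sub_apply, id_eq]; intro h; linarith [hx.2, sub_eq_zero.mp h])
  refine (h1.pow k).mul (ContinuousOn.mul ?_ ?_)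
  · exact continuousOn_id.rpow_const fun x hx => Or.inl (ne_of_gt hx.1)
  · exact ((continuous_const.sub continuous_id).continuousOn).rpow_const
      fun x hx => Or.inl (by simp only [Pi.sub_apply, id_eq]; intro h; linarith [hx.2, sub_eq_zero.mp h])

lemma aesm_logpow (k : ℕ) (u v : ℝ) :
    AEStronglyMeasurable (fun y => Real.log (1-y) ^k * (y ^ (u-1) * (1-y) ^ (v-1)))
      (volume.restrict (Ioo (0:ℝ) 1)) :=
  (contOn_logpow k u v).aestronglyMeasurable measurableSet_Ioo

lemma integrable_logpow (k : ℕ) {u v : ℝ} (hu : 0 < u) (hv : 0 < v) :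
    IntegrableOn (fun y => |Real.log (1-y)|^k * (y ^ (u-1) * (1-y) ^ (v-1)))
      (Ioo (0:ℝ) 1) := by
  set C : ℝ := ((v / (2*(k+1)))⁻¹)^k with hC
  refine Integrable.mono' ((beta_integrable hu (by linarith : (0:ℝ) < v/2)).const_mul C) ?_ ?_
  · have h1 : ContinuousOn (fun y : ℝ => Real.log (1-y)) (Ioo (0:ℝ) 1) :=
      ((continuous_const.sub continuous_id).continuousOn).log
        (fun x hx => by simp only [Pi.sub_apply, id_eq]; intro h; linarith [hx.2, sub_eq_zero.mp h])
    refine ContinuousOn.aestronglyMeasurable ?_ measurableSet_Ioo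
    refine ((h1.abs).pow k).mul (ContinuousOn.mul ?_ ?_)
    · exact continuousOn_id.rpow_const fun x hx => Or.inl (ne_of_gt hx.1)
    · exact ((continuous_const.sub continuous_id).continuousOn).rpow_const
        fun x hx => Or.inl (by simp only [Pi.sub_apply, id_eq]; intro h; linarith [hx.2, sub_eq_zero.mp h])
  · rw [ae_restrict_iff' measurableSet_Ioo]
    refine ae_of_all _ fun y hy => ?_
    have h0 : (0:ℝ) < y := hy.1
    have h1 : (0:ℝ) < 1 - y := by linarith [hy.2]
    rw [Real.norm_eq_abs, abs_of_nonneg (by positivity)]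
    have := logpow_bound k hv hy
    calc |Real.log (1-y)|^k * (y ^ (u-1) * (1-y) ^ (v-1))
        = (|Real.log (1-y)|^k * (1-y) ^ (v-1)) * y ^ (u-1) := by ring
      _ ≤ (C * (1-y) ^ (v/2-1)) * y ^ (u-1) := by
          exact mul_le_mul_of_nonneg_right this (Real.rpow_nonneg h0.le _)
      _ = C * (y ^ (u-1) * (1-y) ^ (v/2-1)) := by ring


lemma integrable_logpow_signed (k : ℕ) {u v : ℝ} (hu : 0 < u) (hv : 0 < v) :
    IntegrableOn (fun y => Real.log (1-y) ^k * (y ^ (u-1) * (1-y) ^ (v-1))) (Ioo (0:ℝ) 1) := by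
  refine Integrable.mono' (integrable_logpow k hu hv) (aesm_logpow k u v) ?_
  rw [ae_restrict_iff' measurableSet_Ioo]
  refine ae_of_all _ fun y hy => ?_
  have h0 : (0:ℝ) < y := hy.1
  have h1 : (0:ℝ) < 1 - y := by linarith [hy.2]
  rw [Real.norm_eq_abs, abs_mul, abs_pow, abs_of_nonneg (by positivity : (0:ℝ) ≤ y ^ (u-1) * (1-y) ^ (v-1))]

lemma hasDerivAt_J (k : ℕ) {u : ℝ} (hu : 0 < u) {s₀ : ℝ} (hs₀ : 0 < s₀) :
    HasDerivAt (fun s => ∫ y in Ioo (0:ℝ) 1, Real.log (1-y) ^ k * (y ^ (u-1) * (1-y) ^ (s-1)))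
      (∫ y in Ioo (0:ℝ) 1, Real.log (1-y) ^ (k+1) * (y ^ (u-1) * (1-y) ^ (s₀-1))) s₀ := by
  have hε : (0:ℝ) < s₀/2 := by linarith
  have key := hasDerivAt_integral_of_dominated_loc_of_deriv_le (μ := volume.restrict (Ioo (0:ℝ) 1))
    (F := fun s y => Real.log (1-y) ^ k * (y ^ (u-1) * (1-y) ^ (s-1)))
    (F' := fun s y => Real.log (1-y) ^ (k+1) * (y ^ (u-1) * (1-y) ^ (s-1)))
    (x₀ := s₀)
    (bound := fun y => |Real.log (1-y)|^(k+1) * (y ^ (u-1) * (1-y) ^ (s₀/2-1)))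
    (Metric.ball_mem_nhds s₀ hε)
    (Filter.Eventually.of_forall fun s => aesm_logpow k u s)
    (integrable_logpow_signed k hu hs₀)
    (aesm_logpow (k+1) u s₀)
    ?_ (integrable_logpow (k+1) hu hε) ?_
  · exact key.2
  · rw [ae_restrict_iff' measurableSet_Ioo]
    refine ae_of_all _ fun y hy s hs => ?_
    have h0 : (0:ℝ) < y := hy.1
    have h1 : (0:ℝ) < 1 - y := by linarith [hy.2]
    have hss : s₀/2 - 1 ≤ s - 1 := by
      rw [Metric.mem_ball, Real.dist_eq, abs_sub_lt_iff] at hs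
      linarith [hs.2]
    rw [Real.norm_eq_abs, abs_mul, abs_pow, abs_of_nonneg (by positivity : (0:ℝ) ≤ y ^ (u-1) * (1-y) ^ (s-1))]
    refine mul_le_mul_of_nonneg_left ?_ (by positivity)
    refine mul_le_mul_of_nonneg_left ?_ (by positivity)
    exact Real.rpow_le_rpow_of_exponent_ge h1 (by linarith [hy.1]) hss
  · rw [ae_restrict_iff' measurableSet_Ioo]
    refine ae_of_all _ fun y hy s hs => ?_
    have h0 : (0:ℝ) < y := hy.1
    have h1 : (0:ℝ) < 1 - y := by linarith [hy.2]
    have h2 : HasDerivAt (fun s : ℝ => (1-y) ^ (s-1)) ((1-y)^(s-1) * Real.log (1-y)) s := by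
      have ha := (Real.hasStrictDerivAt_const_rpow h1 (s-1)).hasDerivAt
      have hb := ha.comp s ((hasDerivAt_id s).sub_const 1)
      simpa [Function.comp_def] using hb
    have h3 := h2.const_mul (Real.log (1-y) ^ k * y ^ (u-1))
    have hfun : (fun s : ℝ => Real.log (1-y) ^ k * (y ^ (u-1) * (1-y) ^ (s-1)))
        = fun s : ℝ => (Real.log (1-y) ^ k * y ^ (u-1)) * (1-y) ^ (s-1) := by
      funext t; ring
    rw [hfun]
    refine h3.congr_deriv ?_
    ring


-- image of Ioo under y ↦ c⁻¹ * (y/(1-y))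
lemma image_Ioo {c : ℝ} (hc : 0 < c) :
    (fun y : ℝ => c⁻¹ * (y/(1-y))) '' Ioo (0:ℝ) 1 = Ioi (0:ℝ) := by
  ext x
  constructor
  · rintro ⟨y, hy, rfl⟩
    have h1 : (0:ℝ) < 1 - y := by linarith [hy.2]
    exact mul_pos (inv_pos.mpr hc) (div_pos hy.1 h1)
  · intro hx
    have hx : (0:ℝ) < x := hx
    refine ⟨c*x/(1+c*x), ⟨by positivity, ?_⟩, ?_⟩
    · rw [div_lt_one (by positivity)]
      linarith
    · show c⁻¹ * (c*x/(1+c*x) / (1 - c*x/(1+c*x))) = x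
      have h1 : 1 - c*x/(1+c*x) = 1/(1+c*x) := by
        field_simp
        ring
      rw [h1]
      field_simp

lemma injOn_cov {c : ℝ} (hc : 0 < c) :
    Set.InjOn (fun y : ℝ => c⁻¹ * (y/(1-y))) (Ioo (0:ℝ) 1) := by
  intro x hx y hy h
  simp only at h
  have h1 : (0:ℝ) < 1 - x := by linarith [hx.2]
  have h2 : (0:ℝ) < 1 - y := by linarith [hy.2]
  field_simp at h
  ring_nf at h
  have hxy : c * x = c * y := by rw [show x = y by linarith]
  exact mul_left_cancel₀ hc.ne' hxy

lemma hasDeriv_cov {c : ℝ} (hc : 0 < c) {y : ℝ} (hy : y ∈ Ioo (0:ℝ) 1) :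
    HasDerivAt (fun y : ℝ => c⁻¹ * (y/(1-y))) (c⁻¹ / (1-y)^2) y := by
  have h1 : (0:ℝ) < 1 - y := by linarith [hy.2]
  have h := ((hasDerivAt_id y).div ((hasDerivAt_const y (1:ℝ)).sub (hasDerivAt_id y)) h1.ne').const_mul c⁻¹
  refine h.congr_deriv ?_
  simp only [Pi.sub_apply, id_eq]
  ring

lemma cov_pointwise {c α β K : ℝ} (hc : 0 < c) {y : ℝ} (hy : y ∈ Ioo (0:ℝ) 1) :
    |c⁻¹ / (1-y)^2| • ((Real.log (1 + c * (c⁻¹ * (y/(1-y)))))^2 *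
      (K * c^α * (c⁻¹*(y/(1-y)))^(α-1) * (1 + c*(c⁻¹*(y/(1-y))))^(-(α+β))))
    = K * (Real.log (1-y) ^ 2 * (y^(α-1) * (1-y)^(β-1))) := by
  have h0 : (0:ℝ) < y := hy.1
  have h1 : (0:ℝ) < 1 - y := by linarith [hy.2]
  have e1 : 1 + c * (c⁻¹ * (y/(1-y))) = (1-y)⁻¹ := by
    field_simp
    ring
  have e2 : (c⁻¹*(y/(1-y)))^(α-1) = c⁻¹^(α-1) * (y^(α-1) / (1-y)^(α-1)) := by
    rw [Real.mul_rpow (by positivity) (by positivity), Real.div_rpow h0.le h1.le]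
  have e3 : ((1-y)⁻¹ : ℝ)^(-(α+β)) = (1-y)^(α+β) := by
    rw [Real.inv_rpow h1.le, Real.rpow_neg h1.le, inv_inv]
  rw [e1, e2, e3, smul_eq_mul, abs_of_pos (by positivity), Real.log_inv, neg_sq]
  have ec : c⁻¹ * c^α * c⁻¹^(α-1) = 1 := by
    rw [Real.inv_rpow hc.le]
    have h2 : c * c^(α-1) = c^α := by
      nth_rewrite 1 [← Real.rpow_one c]
      rw [← Real.rpow_add hc]
      norm_num
    field_simp
    nlinarith [h2, Real.rpow_pos_of_pos hc (α-1), Real.rpow_pos_of_pos hc α]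
  have et : (1-y)^(α+β) * ((1-y)^(α-1))⁻¹ * (((1-y))^2)⁻¹ = (1-y)^(β-1) := by
    rw [← Real.rpow_natCast (1-y) 2, ← Real.rpow_neg h1.le, ← Real.rpow_neg h1.le,
      ← Real.rpow_add h1, ← Real.rpow_add h1]
    norm_num
    congr 1
    ring
  calc c⁻¹ / (1-y)^2 * (Real.log (1-y) ^2 *
        (K * c^α * (c⁻¹^(α-1) * (y^(α-1) / (1-y)^(α-1))) * (1-y)^(α+β)))
      = (K * (Real.log (1-y) ^ 2 * y^(α-1))) * (c⁻¹ * c^α * c⁻¹^(α-1))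
          * ((1-y)^(α+β) * ((1-y)^(α-1))⁻¹ * (((1-y))^2)⁻¹) := by ring
    _ = K * (Real.log (1-y) ^ 2 * (y^(α-1) * (1-y)^(β-1))) := by rw [ec, et]; ring


section E
variable {α : ℝ} (hα : 0 < α) (β : ℝ)

noncomputable def Efun (α β s : ℝ) : ℝ :=
  Real.exp (Real.log (Real.Gamma s) - Real.log (Real.Gamma (α+s))
    - Real.log (Real.Gamma β) + Real.log (Real.Gamma (α+β)))

lemma hasDerivAt_Efun {α : ℝ} (hα : 0 < α) (β : ℝ) {s : ℝ} (hs : 0 < s) :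
    HasDerivAt (Efun α β) ((digamma s - digamma (α+s)) * Efun α β s) s := by
  have h1 : HasDerivAt (fun t => Real.log (Real.Gamma (α+t))) (digamma (α+s)) s := by
    have := (hasDerivAt_logGamma (by linarith : (0:ℝ) < α + s)).comp s
      ((hasDerivAt_id s).const_add α)
    simpa [Function.comp_def] using this
  have h2 : HasDerivAt (fun t => Real.log (Real.Gamma t) - Real.log (Real.Gamma (α+t))
      - Real.log (Real.Gamma β) + Real.log (Real.Gamma (α+β)))
      (digamma s - digamma (α+s)) s := by
    simpa using (((hasDerivAt_logGamma hs).sub h1).sub_const (Real.log (Real.Gamma β))).add_const (Real.log (Real.Gamma (α+β)))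
  have := h2.exp; rw [mul_comm] at this; exact this

lemma hasDerivAt_Dfun {α : ℝ} (hα : 0 < α) {s : ℝ} (hs : 0 < s) :
    HasDerivAt (fun t => digamma t - digamma (α+t)) (trigamma s - trigamma (α+s)) s := by
  have h1 : HasDerivAt (fun t => digamma (α+t)) (trigamma (α+s)) s := by
    have := (hasDerivAt_digamma (by linarith : (0:ℝ) < α + s)).comp s
      ((hasDerivAt_id s).const_add α)
    simpa [Function.comp_def] using this
  exact (hasDerivAt_digamma hs).sub h1
end E


theorem stmt_5 (a b : ℝ) (ha : 0 < a) (hb : 0 < b) :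
    ∫ x in Set.Ioi (0 : ℝ), (Real.log (1 + (a / b) * x)) ^ 2 * fDensity a b x
      = (digamma (b / 2) - digamma ((a + b) / 2)) ^ 2
          + (trigamma (b / 2) - trigamma ((a + b) / 2)) := by
  set α : ℝ := a / 2 with hα_def
  set β : ℝ := b / 2 with hβ_def
  have hα : 0 < α := by positivity
  have hβ : 0 < β := by positivity
  set c : ℝ := a / b with hc_def
  have hc : 0 < c := by positivity
  set K : ℝ := Real.Gamma (α + β) / (Real.Gamma α * Real.Gamma β) with hK_def
  have hab : (a + b) / 2 = α + β := by rw [hα_def, hβ_def]; ring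
  -- the family of integrals
  set J : ℕ → ℝ → ℝ := fun k s =>
    ∫ y in Ioo (0:ℝ) 1, Real.log (1-y) ^ k * (y ^ (α-1) * (1-y) ^ (s-1)) with hJ_def
  -- Step 1 : change of variables
  have step1 : ∫ x in Set.Ioi (0 : ℝ), (Real.log (1 + (a / b) * x)) ^ 2 * fDensity a b x
      = K * J 2 β := by
    rw [← image_Ioo hc]
    rw [integral_image_eq_integral_abs_deriv_smul measurableSet_Ioo
      (fun y hy => (hasDeriv_cov hc hy).hasDerivWithinAt) (injOn_cov hc)]
    rw [hJ_def, ← MeasureTheory.integral_const_mul]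
    refine setIntegral_congr_fun measurableSet_Ioo fun y hy => ?_
    have hx : a * (c⁻¹ * (y/(1-y))) / b = c * (c⁻¹ * (y/(1-y))) := by
      rw [hc_def]; ring
    simp only [fDensity, hx, hab, ← hc_def, ← hα_def, ← hK_def]
    exact cov_pointwise hc hy
  rw [step1]
  -- Step 2 : beta-function identities
  have hJ0 : ∀ s : ℝ, 0 < s → K * J 0 s = Efun α β s := by
    intro s hs
    have h1 : J 0 s = ∫ y in Ioo (0:ℝ) 1, y ^ (α-1) * (1-y) ^ (s-1) := by
      rw [hJ_def]
      refine setIntegral_congr_fun measurableSet_Ioo fun y hy => ?_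
      simp
    rw [h1, realBeta hα hs, Efun]
    have g1 := Real.Gamma_pos_of_pos hα
    have g2 := Real.Gamma_pos_of_pos hs
    have g3 := Real.Gamma_pos_of_pos (by linarith : (0:ℝ) < α + s)
    have g4 := Real.Gamma_pos_of_pos hβ
    have g5 := Real.Gamma_pos_of_pos (by linarith : (0:ℝ) < α + β)
    rw [Real.exp_add, Real.exp_sub, Real.exp_sub, Real.exp_log g2, Real.exp_log g3,
      Real.exp_log g4, Real.exp_log g5]
    field_simp [g1.ne', g2.ne', g3.ne', g4.ne', g5.ne']
    rw [hK_def]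
    field_simp
  -- first derivative identity on Ioi 0
  have hD1 : ∀ s : ℝ, 0 < s → K * J 1 s = (digamma s - digamma (α+s)) * Efun α β s := by
    intro s hs
    have hder : HasDerivAt (fun t => K * J 0 t) (K * J 1 s) s := by
      simpa [hJ_def] using ((hasDerivAt_J 0 hα hs).const_mul K)
    have heq : (fun t => K * J 0 t) =ᶠ[nhds s] Efun α β := by
      filter_upwards [Ioi_mem_nhds hs] with t ht
      exact hJ0 t ht
    have hder2 : HasDerivAt (Efun α β) (K * J 1 s) s :=
      hder.congr_of_eventuallyEq heq.symm
    exact hder2.unique (hasDerivAt_Efun hα β hs)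
  -- second derivative at β
  have hEβ : Efun α β β = 1 := by
    rw [Efun]
    ring_nf
    exact Real.exp_zero
  have hder : HasDerivAt (fun t => K * J 1 t) (K * J 2 β) β := by
    simpa [hJ_def] using ((hasDerivAt_J 1 hα hβ).const_mul K)
  have heq : (fun t => K * J 1 t) =ᶠ[nhds β]
      (fun t => (digamma t - digamma (α+t)) * Efun α β t) := by
    filter_upwards [Ioi_mem_nhds hβ] with t ht
    exact hD1 t ht
  have hder2 : HasDerivAt (fun t => (digamma t - digamma (α+t)) * Efun α β t)
      (K * J 2 β) β := hder.congr_of_eventuallyEq heq.symm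
  have hder3 : HasDerivAt (fun t => (digamma t - digamma (α+t)) * Efun α β t)
      ((trigamma β - trigamma (α+β)) * Efun α β β
        + (digamma β - digamma (α+β)) * ((digamma β - digamma (α+β)) * Efun α β β)) β :=
    (hasDerivAt_Dfun hα hβ).mul (hasDerivAt_Efun hα β hβ)
  have hfinal := hder2.unique hder3
  rw [hEβ] at hfinal
  rw [hfinal, hab]
  ring
end

section
/- (Lemma 1, mean.) For all natural numbers b ≥ 1 and N ≥ b + 2, the integral over (0,∞) of N · log(1 + b x/(N − b − 1)) · f_{b, N−b−1}(x) with respect to x equals N · (ψ((N−1)/2) − ψ((N−b−1)/2)). -/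
open MeasureTheory

open Real Set

-- beta integrand integrable
lemma betaIntOn {c d : ℝ} (hc : 0 < c) (hd : 0 < d) :
    IntegrableOn (fun u : ℝ => u ^ (c - 1) * (1 - u) ^ (d - 1)) (Ioo 0 1) := by
  have h := Complex.betaIntegral_convergent (u := (c : ℂ)) (v := (d : ℂ))
    (by simpa using hc) (by simpa using hd)
  have h2 : IntegrableOn (fun x : ℝ => (x : ℂ) ^ ((c : ℂ) - 1) * ((1 : ℂ) - x) ^ ((d : ℂ) - 1))
      (Ioc 0 1) := by
    simpa [intervalIntegrable_iff, uIoc_of_le (zero_le_one (α := ℝ))] using h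
  have h3 : IntegrableOn
      (fun x : ℝ => ((x : ℂ) ^ ((c : ℂ) - 1) * ((1 : ℂ) - x) ^ ((d : ℂ) - 1)).re) (Ioo 0 1) :=
    (h2.mono_set Ioo_subset_Ioc_self).re
  apply IntegrableOn.congr_fun h3 ?_ measurableSet_Ioo
  intro x hx
  have hx0 : (0:ℝ) ≤ x := hx.1.le
  have hx1 : (0:ℝ) ≤ 1 - x := by linarith [hx.2]
  simp only [Function.comp]
  rw [show ((c:ℂ) - 1) = ((c - 1 : ℝ) : ℂ) by push_cast; ring,
    show ((d:ℂ) - 1) = ((d - 1 : ℝ) : ℂ) by push_cast; ring,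
    show ((1:ℂ) - (x:ℝ)) = (((1 - x : ℝ)) : ℂ) by push_cast; ring,
    ← Complex.ofReal_cpow hx0, ← Complex.ofReal_cpow hx1, ← Complex.ofReal_mul]
  simp

lemma measAux (c d : ℝ) : Measurable (fun u : ℝ => u ^ (c - 1) * (1 - u) ^ (d - 1)) := by
  exact (measurable_id.pow_const (c-1)).mul ((measurable_const.sub measurable_id).pow_const (d-1))

lemma logBound {u c : ℝ} (hu0 : 0 < u) (hu1 : u < 1) (hc : 0 < c) :
    |Real.log u| ≤ (2 / c) * u ^ (-(c/2)) := by
  have hlu : Real.log u < 0 := Real.log_neg hu0 hu1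
  rw [abs_of_neg hlu]
  have h1 : Real.log (u ^ (-(c/2))) ≤ u ^ (-(c/2)) - 1 :=
    Real.log_le_sub_one_of_pos (Real.rpow_pos_of_pos hu0 _)
  rw [Real.log_rpow hu0] at h1
  have h2 : -(c/2) * Real.log u ≤ u ^ (-(c/2)) := by
    have := Real.rpow_pos_of_pos hu0 (-(c/2)); linarith
  have hc2 : 0 < c / 2 := by linarith
  calc -Real.log u = (2 / c) * (-(c/2) * Real.log u) := by field_simp
    _ ≤ (2 / c) * u ^ (-(c/2)) := by
        apply mul_le_mul_of_nonneg_left h2 (by positivity)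

lemma logBetaIntOn {c d : ℝ} (hc : 0 < c) (hd : 0 < d) :
    IntegrableOn (fun u : ℝ => |Real.log u| * (u ^ (c - 1) * (1 - u) ^ (d - 1))) (Ioo 0 1) := by
  have hint : IntegrableOn (fun u : ℝ => (2 / c) * (u ^ (c/2 - 1) * (1 - u) ^ (d - 1)))
      (Ioo 0 1) := (betaIntOn (by linarith : (0:ℝ) < c/2) hd).const_mul _
  apply hint.mono' (((measurable_log.abs).mul (measAux c d)).aestronglyMeasurable)
  rw [ae_restrict_iff' measurableSet_Ioo]
  filter_upwards with u hu
  obtain ⟨hu0, hu1⟩ := hu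
  have h1u : (0:ℝ) < 1 - u := by linarith
  have hb := logBound hu0 hu1 hc
  have key : |Real.log u| * u ^ (c - 1) ≤ (2 / c) * u ^ (c/2 - 1) := by
    calc |Real.log u| * u ^ (c - 1) ≤ ((2 / c) * u ^ (-(c/2))) * u ^ (c - 1) :=
          mul_le_mul_of_nonneg_right hb (by positivity)
      _ = (2 / c) * u ^ (c/2 - 1) := by
          rw [mul_assoc, ← Real.rpow_add hu0]; ring_nf
  show ‖|Real.log u| * (u ^ (c - 1) * (1 - u) ^ (d - 1))‖ ≤ _
  rw [norm_of_nonneg (mul_nonneg (abs_nonneg _) (mul_nonneg (Real.rpow_nonneg hu0.le _) (Real.rpow_nonneg h1u.le _)))]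
  calc |Real.log u| * (u ^ (c - 1) * (1 - u) ^ (d - 1))
      = (|Real.log u| * u ^ (c - 1)) * (1 - u) ^ (d - 1) := by ring
    _ ≤ ((2 / c) * u ^ (c/2 - 1)) * (1 - u) ^ (d - 1) :=
        mul_le_mul_of_nonneg_right key (by positivity)
    _ = (2 / c) * (u ^ (c/2 - 1) * (1 - u) ^ (d - 1)) := by ring

lemma derivBeta {α β : ℝ} (hα : 0 < α) (hβ : 0 < β) :
    HasDerivAt (fun b : ℝ => ∫ u in Ioo (0:ℝ) 1, u ^ (b - 1) * (1 - u) ^ (α - 1))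
      (∫ u in Ioo (0:ℝ) 1, Real.log u * (u ^ (β - 1) * (1 - u) ^ (α - 1))) β := by
  have hmeasF : ∀ b : ℝ, AEStronglyMeasurable
      (fun u : ℝ => u ^ (b - 1) * (1 - u) ^ (α - 1))
      (volume.restrict (Ioo (0:ℝ) 1)) := fun b => (measAux b α).aestronglyMeasurable
  have hmeasF' : AEStronglyMeasurable
      (fun u : ℝ => Real.log u * (u ^ (β - 1) * (1 - u) ^ (α - 1)))
      (volume.restrict (Ioo (0:ℝ) 1)) :=
    (measurable_log.mul (measAux β α)).aestronglyMeasurable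
  have key := hasDerivAt_integral_of_dominated_loc_of_deriv_le
    (F := fun b (u : ℝ) => u ^ (b - 1) * (1 - u) ^ (α - 1))
    (F' := fun b (u : ℝ) => Real.log u * (u ^ (b - 1) * (1 - u) ^ (α - 1)))
    (x₀ := β) (μ := volume.restrict (Ioo (0:ℝ) 1))
    (bound := fun u => |Real.log u| * (u ^ (β/2 - 1) * (1 - u) ^ (α - 1)))
    (Metric.ball_mem_nhds β (by linarith : (0:ℝ) < β/2))
    (Filter.Eventually.of_forall hmeasF) (betaIntOn hβ hα) hmeasF' ?_
    (logBetaIntOn (by linarith) hα) ?_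
  · exact key.2
  · rw [ae_restrict_iff' measurableSet_Ioo]
    filter_upwards with u hu
    intro x hx
    obtain ⟨hu0, hu1⟩ := hu
    rw [Metric.mem_ball, Real.dist_eq] at hx
    have hx2 : β/2 - 1 ≤ x - 1 := by
      cases abs_sub_lt_iff.mp hx with | intro h1 h2 => linarith
    have hpow : u ^ (x - 1) ≤ u ^ (β/2 - 1) :=
      Real.rpow_le_rpow_of_exponent_ge hu0 hu1.le hx2
    have h1u : (0:ℝ) ≤ (1 - u) ^ (α - 1) := Real.rpow_nonneg (by linarith) _
    rw [norm_mul, norm_mul, norm_of_nonneg (Real.rpow_nonneg hu0.le _),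
      norm_of_nonneg h1u, Real.norm_eq_abs]
    have := mul_le_mul_of_nonneg_right hpow h1u
    calc |Real.log u| * (u ^ (x - 1) * (1 - u) ^ (α - 1))
        ≤ |Real.log u| * (u ^ (β/2 - 1) * (1 - u) ^ (α - 1)) :=
          mul_le_mul_of_nonneg_left this (abs_nonneg _)
      _ = _ := rfl
  · rw [ae_restrict_iff' measurableSet_Ioo]
    filter_upwards with u hu
    intro x _
    obtain ⟨hu0, _⟩ := hu
    have h1 : HasDerivAt (fun b : ℝ => u ^ (b - 1)) (u ^ (x - 1) * Real.log u) x := by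
      have h0 : HasDerivAt (fun b : ℝ => u ^ b) (u ^ (x-1) * Real.log u) (x - 1) :=
        (Real.hasStrictDerivAt_const_rpow hu0 (x-1)).hasDerivAt
      have hin : HasDerivAt (fun b : ℝ => b - 1) 1 x := (hasDerivAt_id x).sub_const 1
      exact h0.comp_sub_const x 1
    have := h1.mul_const ((1 - u) ^ (α - 1))
    refine this.congr_deriv ?_
    ring

lemma betaGamma {α β : ℝ} (hα : 0 < α) (hβ : 0 < β) :
    ∫ u in Ioo (0:ℝ) 1, u ^ (β - 1) * (1 - u) ^ (α - 1)
      = Real.Gamma β * Real.Gamma α / Real.Gamma (β + α) := by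
  have h := Complex.Gamma_mul_Gamma_eq_betaIntegral
    (s := (β : ℂ)) (t := (α : ℂ)) (by simpa using hβ) (by simpa using hα)
  have hbeta : Complex.betaIntegral (β : ℂ) (α : ℂ)
      = ((∫ u in Ioo (0:ℝ) 1, u ^ (β - 1) * (1 - u) ^ (α - 1) : ℝ) : ℂ) := by
    rw [Complex.betaIntegral, intervalIntegral.integral_of_le zero_le_one,
      MeasureTheory.integral_Ioc_eq_integral_Ioo]
    rw [show ((∫ u in Ioo (0:ℝ) 1, u ^ (β - 1) * (1 - u) ^ (α - 1) : ℝ) : ℂ)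
        = ∫ u in Ioo (0:ℝ) 1, ((u ^ (β - 1) * (1 - u) ^ (α - 1) : ℝ) : ℂ) from
      (integral_ofReal (𝕜 := ℂ)).symm]
    apply setIntegral_congr_fun measurableSet_Ioo
    intro x hx
    obtain ⟨hx0, hx1⟩ := hx
    show (x:ℂ) ^ ((β:ℂ) - 1) * ((1:ℂ) - (x:ℂ)) ^ ((α:ℂ) - 1) = _
    rw [show ((β:ℂ) - 1) = ((β - 1 : ℝ) : ℂ) by push_cast; ring,
      show ((α:ℂ) - 1) = ((α - 1 : ℝ) : ℂ) by push_cast; ring,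
      show ((1:ℂ) - (x:ℂ)) = (((1 - x : ℝ)) : ℂ) by push_cast; ring,
      ← Complex.ofReal_cpow hx0.le, ← Complex.ofReal_cpow (by linarith : (0:ℝ) ≤ 1 - x),
      ← Complex.ofReal_mul]
  rw [hbeta] at h
  have hG : (0:ℝ) < Real.Gamma (β + α) := Real.Gamma_pos_of_pos (by linarith)
  have h2 : Real.Gamma β * Real.Gamma α
      = Real.Gamma (β + α) * ∫ u in Ioo (0:ℝ) 1, u ^ (β - 1) * (1 - u) ^ (α - 1) := by
    have := h
    rw [show ((β:ℂ) + α) = ((β + α : ℝ) : ℂ) by push_cast; ring] at this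
    rw [Complex.Gamma_ofReal, Complex.Gamma_ofReal, Complex.Gamma_ofReal,
      ← Complex.ofReal_mul, ← Complex.ofReal_mul] at this
    exact_mod_cast this
  field_simp [h2]
  rw [h2]; ring

lemma digamma_hasDeriv {x : ℝ} (hx : 0 < x) :
    HasDerivAt (fun y => Real.log (Real.Gamma y)) (deriv Real.Gamma x / Real.Gamma x) x := by
  have hd : DifferentiableAt ℝ Real.Gamma x :=
    Real.differentiableAt_Gamma (fun m => by
      have : (0:ℝ) ≤ m := Nat.cast_nonneg m
      intro hc; rw [hc] at hx; linarith)
  exact hd.hasDerivAt.log (Real.Gamma_pos_of_pos hx).ne'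

lemma digamma_eq {x : ℝ} (hx : 0 < x) :
    digamma x = deriv Real.Gamma x / Real.Gamma x :=
  (digamma_hasDeriv hx).deriv

lemma gammaRatio_hasDeriv {α β : ℝ} (hα : 0 < α) (hβ : 0 < β) :
    HasDerivAt (fun b : ℝ => Real.Gamma b * Real.Gamma α / Real.Gamma (b + α))
      (Real.Gamma β * Real.Gamma α / Real.Gamma (β + α) * (digamma β - digamma (β + α))) β := by
  have hne : ∀ {x : ℝ}, 0 < x → ∀ m : ℕ, x ≠ -(m : ℝ) := by
    intro x hx m hc
    have : (0:ℝ) ≤ m := Nat.cast_nonneg m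
    rw [hc] at hx; linarith
  have hdβ : DifferentiableAt ℝ Real.Gamma β := Real.differentiableAt_Gamma (hne hβ)
  have hdβα : DifferentiableAt ℝ Real.Gamma (β + α) :=
    Real.differentiableAt_Gamma (hne (by linarith))
  have hcomp : HasDerivAt (fun b : ℝ => Real.Gamma (b + α)) (deriv Real.Gamma (β + α)) β := by
    exact hdβα.hasDerivAt.comp_add_const β α
  have hd := ((hdβ.hasDerivAt.mul_const (Real.Gamma α)).div hcomp
    (Real.Gamma_pos_of_pos (by linarith : (0:ℝ) < β + α)).ne')
  refine hd.congr_deriv ?_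
  have hGβ : (0:ℝ) < Real.Gamma β := Real.Gamma_pos_of_pos hβ
  have hGβα : (0:ℝ) < Real.Gamma (β + α) := Real.Gamma_pos_of_pos (by linarith)
  rw [digamma_eq hβ, digamma_eq (by linarith : (0:ℝ) < β + α)]
  field_simp

lemma logMoment {α β : ℝ} (hα : 0 < α) (hβ : 0 < β) :
    ∫ u in Ioo (0:ℝ) 1, (-Real.log u) * (u ^ (β - 1) * (1 - u) ^ (α - 1))
      = Real.Gamma β * Real.Gamma α / Real.Gamma (β + α)
        * (digamma (β + α) - digamma β) := by
  have h1 := derivBeta hα hβ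
  have heq : (fun b : ℝ => ∫ u in Ioo (0:ℝ) 1, u ^ (b - 1) * (1 - u) ^ (α - 1))
      =ᶠ[nhds β] (fun b : ℝ => Real.Gamma b * Real.Gamma α / Real.Gamma (b + α)) := by
    filter_upwards [IsOpen.mem_nhds isOpen_Ioi (mem_Ioi.mpr hβ)] with b hb
    exact betaGamma hα (mem_Ioi.mp hb)
  have h2 : HasDerivAt (fun b : ℝ => Real.Gamma b * Real.Gamma α / Real.Gamma (b + α))
      (∫ u in Ioo (0:ℝ) 1, Real.log u * (u ^ (β - 1) * (1 - u) ^ (α - 1))) β :=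
    h1.congr_of_eventuallyEq heq.symm
  have h3 := gammaRatio_hasDeriv hα hβ
  have h4 := h2.unique h3
  rw [show (fun u : ℝ => (-Real.log u) * (u ^ (β - 1) * (1 - u) ^ (α - 1)))
      = (fun u : ℝ => -(Real.log u * (u ^ (β - 1) * (1 - u) ^ (α - 1)))) by
    funext u; ring]
  rw [integral_neg, h4]
  ring

lemma changeVar {a m : ℝ} (ha : 0 < a) (hm : 0 < m) (g : ℝ → ℝ) :
    ∫ x in Ioi (0:ℝ), g x
      = ∫ u in Ioo (0:ℝ) 1, |(-(m/(a*u^2)))| • g (m*(1-u)/(a*u)) := by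
  have himg : (fun u : ℝ => m*(1-u)/(a*u)) '' Ioo 0 1 = Ioi 0 := by
    ext y
    constructor
    · rintro ⟨u, ⟨hu0, hu1⟩, rfl⟩
      have : 0 < m*(1-u)/(a*u) := by
        apply div_pos (by nlinarith) (by positivity)
      simpa using this
    · intro hy
      have hy' : (0:ℝ) < y := hy
      refine ⟨m/(m + a*y), ⟨by positivity, ?_⟩, ?_⟩
      · rw [div_lt_one (by positivity)]
        nlinarith
      · field_simp
        ring
  have hderiv : ∀ u ∈ Ioo (0:ℝ) 1,
      HasDerivWithinAt (fun u : ℝ => m*(1-u)/(a*u)) (-(m/(a*u^2))) (Ioo 0 1) u := by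
    intro u hu
    have hu0 : (0:ℝ) < u := hu.1
    have h : HasDerivAt (fun u : ℝ => m*(1-u)/(a*u)) (-(m/(a*u^2))) u := by
      have hnum : HasDerivAt (fun u : ℝ => m*(1-u)) (-m) u := by
        simpa using ((hasDerivAt_id u).const_sub 1).const_mul m
      have hden : HasDerivAt (fun u : ℝ => a*u) a u := by
        simpa using (hasDerivAt_id u).const_mul a
      have := hnum.div hden (by positivity)
      refine this.congr_deriv ?_
      field_simp
      ring
    exact h.hasDerivWithinAt
  have hinj : InjOn (fun u : ℝ => m*(1-u)/(a*u)) (Ioo 0 1) := by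
    intro u hu v hv h
    have hu0 : (0:ℝ) < u := hu.1
    have hv0 : (0:ℝ) < v := hv.1
    field_simp at h
    have h3 : (1 - u) * v = (1 - v) * u := by
      have hma : (m * a) ≠ 0 := by positivity
      apply mul_left_cancel₀ hma
      linear_combination (m * a) * h
    ring_nf at h3
    linarith
  rw [← himg]
  exact integral_image_eq_integral_abs_deriv_smul measurableSet_Ioo hderiv hinj g

lemma density_eval {a m u : ℝ} (ha : 0 < a) (hm : 0 < m) (hu0 : 0 < u) (hu1 : u < 1) :
    |(-(m/(a*u^2)))| * fDensity a m (m*(1-u)/(a*u))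
      = (Real.Gamma ((a+m)/2) / (Real.Gamma (a/2) * Real.Gamma (m/2))) *
        (u ^ (m/2 - 1) * (1 - u) ^ (a/2 - 1)) := by
  have h1u : (0:ℝ) < 1 - u := by linarith
  have habs : |(-(m/(a*u^2)))| = m/(a*u^2) := by
    rw [abs_neg, abs_of_pos (by positivity)]
  have e1 : 1 + a * (m*(1-u)/(a*u)) / m = 1/u := by
    field_simp
    ring
  have e2 : (1/u : ℝ) ^ (-((a+m)/2)) = u ^ ((a+m)/2) := by
    rw [one_div, Real.inv_rpow hu0.le, Real.rpow_neg hu0.le, inv_inv]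
  have e3 : (m*(1-u)/(a*u)) ^ (a/2 - 1)
      = (m/a) ^ (a/2-1) * ((1-u) ^ (a/2-1) * u ^ (-(a/2-1))) := by
    rw [(div_mul_div_comm m a (1-u) u).symm,
      Real.mul_rpow (by positivity) (by positivity),
      Real.div_rpow h1u.le hu0.le, Real.rpow_neg hu0.le]
    ring
  have e4 : (a/m) ^ (a/2) * (m/a) ^ (a/2-1) = a/m := by
    rw [show m/a = (a/m)⁻¹ by rw [inv_div],
      Real.inv_rpow (by positivity), ← Real.rpow_neg (by positivity),
      ← Real.rpow_add (by positivity), show a/2 + -(a/2-1) = 1 by ring, Real.rpow_one]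
  have e5 : u ^ (-(a/2-1)) * u ^ ((a+m)/2) = u ^ (m/2 - 1) * u ^ (2:ℕ) := by
    rw [← Real.rpow_add hu0, ← Real.rpow_natCast u 2, ← Real.rpow_add hu0]
    congr 1
    push_cast
    ring
  rw [habs, fDensity, e1, e2, e3]
  calc m/(a*u^2) * ((Real.Gamma ((a+m)/2) / (Real.Gamma (a/2) * Real.Gamma (m/2))) *
        (a/m) ^ (a/2) * ((m/a) ^ (a/2-1) * ((1-u) ^ (a/2-1) * u ^ (-(a/2-1)))) *
        u ^ ((a+m)/2))
      = ((a/m) ^ (a/2) * (m/a) ^ (a/2-1)) * (u ^ (-(a/2-1)) * u ^ ((a+m)/2)) *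
        (1-u) ^ (a/2-1) * (Real.Gamma ((a+m)/2) / (Real.Gamma (a/2) * Real.Gamma (m/2))) *
        (m/(a*u^2)) := by ring
    _ = (a/m) * (u ^ (m/2 - 1) * u ^ (2:ℕ)) *
        (1-u) ^ (a/2-1) * (Real.Gamma ((a+m)/2) / (Real.Gamma (a/2) * Real.Gamma (m/2))) *
        (m/(a*u^2)) := by rw [e4, e5]
    _ = _ := by field_simp

theorem stmt_6 (b N : ℕ) (hb : 1 ≤ b) (hN : b + 2 ≤ N) :
    ∫ x in Set.Ioi (0 : ℝ),
        (N : ℝ) * Real.log (1 + (b : ℝ) * x / ((N : ℝ) - b - 1)) *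
          fDensity (b : ℝ) ((N : ℝ) - b - 1) x
      = (N : ℝ) *
          (digamma (((N : ℝ) - 1) / 2) - digamma (((N : ℝ) - b - 1) / 2)) := by
  have h1 : (1:ℝ) ≤ (b:ℝ) := by exact_mod_cast hb
  have h2 : (b:ℝ) + 2 ≤ (N:ℝ) := by exact_mod_cast hN
  set a : ℝ := (b:ℝ) with ha_def
  set m : ℝ := (N:ℝ) - b - 1 with hm_def
  have ha : 0 < a := by simp only [ha_def]; linarith
  have hm : 0 < m := by simp only [hm_def]; linarith
  have hC : (0:ℝ) < Real.Gamma ((a+m)/2) / (Real.Gamma (a/2) * Real.Gamma (m/2)) := by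
    have := Real.Gamma_pos_of_pos (show (0:ℝ) < (a+m)/2 by linarith)
    have := Real.Gamma_pos_of_pos (show (0:ℝ) < a/2 by linarith)
    have := Real.Gamma_pos_of_pos (show (0:ℝ) < m/2 by linarith)
    positivity
  rw [changeVar ha hm]
  have hcong : ∫ u in Ioo (0:ℝ) 1,
      |(-(m/(a*u^2)))| • ((N : ℝ) * Real.log (1 + a * (m*(1-u)/(a*u)) / m) *
        fDensity a m (m*(1-u)/(a*u)))
      = ∫ u in Ioo (0:ℝ) 1,
        ((N:ℝ) * (Real.Gamma ((a+m)/2) / (Real.Gamma (a/2) * Real.Gamma (m/2)))) *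
          ((-Real.log u) * (u ^ (m/2 - 1) * (1 - u) ^ (a/2 - 1))) := by
    apply setIntegral_congr_fun measurableSet_Ioo
    intro u hu
    obtain ⟨hu0, hu1⟩ := hu
    have e1 : 1 + a * (m*(1-u)/(a*u)) / m = 1/u := by field_simp; ring
    have elog : Real.log (1 + a * (m*(1-u)/(a*u)) / m) = -Real.log u := by
      rw [e1, one_div, Real.log_inv]
    have ed := density_eval ha hm hu0 hu1
    simp only [smul_eq_mul]
    rw [elog]
    calc |(-(m/(a*u^2)))| * ((N:ℝ) * (-Real.log u) * fDensity a m (m*(1-u)/(a*u)))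
        = ((N:ℝ) * (-Real.log u)) * (|(-(m/(a*u^2)))| * fDensity a m (m*(1-u)/(a*u))) := by
          ring
      _ = ((N:ℝ) * (-Real.log u)) *
            ((Real.Gamma ((a+m)/2) / (Real.Gamma (a/2) * Real.Gamma (m/2))) *
              (u ^ (m/2 - 1) * (1 - u) ^ (a/2 - 1))) := by rw [ed]
      _ = _ := by ring
  rw [hcong, integral_const_mul, logMoment (show (0:ℝ) < a/2 by linarith)
    (show (0:ℝ) < m/2 by linarith)]
  have hΓa : (0:ℝ) < Real.Gamma (a/2) := Real.Gamma_pos_of_pos (by linarith)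
  have hΓm : (0:ℝ) < Real.Gamma (m/2) := Real.Gamma_pos_of_pos (by linarith)
  have hΓam : (0:ℝ) < Real.Gamma ((a+m)/2) := Real.Gamma_pos_of_pos (by linarith)
  have hsum : m/2 + a/2 = (a+m)/2 := by ring
  have hN1 : ((N:ℝ) - 1) / 2 = (a+m)/2 := by
    simp only [ha_def, hm_def]; ring
  have hN2 : ((N:ℝ) - (b:ℝ) - 1) / 2 = m/2 := by
    simp only [hm_def]
  rw [hsum, hN1, hN2]
  field_simp
end
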